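/- arXiv:2601.10793 — 2 statements merged into one kernel-verified Lean document; each statement's English description precedes it below -/
import Mathlib

section
/- Let φ : ℝ → ℝ be continuous and let m > 1 be real. Then lim_{t→0} (sign(t)·∫₀ᵗ φ(x)|x|^{m-1} dx) / |t|^m = φ(0)/m. -/
open intervalIntegral MeasureTheory

lemma absPow_integral (m : ℝ) (hm : 1 < m) (t : ℝ) :
    ∫ x in (0:ℝ)..t, |x| ^ (m - 1) = Real.sign t * |t| ^ m / m := by
  have hm0 : (0:ℝ) < m := by linarith
  have base : ∀ s : ℝ, 0 ≤ s → ∫ x in (0:ℝ)..s, |x| ^ (m - 1) = s ^ m / m := by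
    intro s hs
    have : ∫ x in (0:ℝ)..s, |x| ^ (m - 1) = ∫ x in (0:ℝ)..s, x ^ (m - 1) := by
      apply intervalIntegral.integral_congr
      intro x hx
      rw [Set.uIcc_of_le hs] at hx
      simp only
      rw [abs_of_nonneg hx.1]
    rw [this, integral_rpow (Or.inl (by linarith))]
    rw [Real.zero_rpow (by linarith), sub_add_cancel, sub_zero]
  rcases lt_trichotomy t 0 with hlt | heq | hgt
  · have even : (∫ x in (0:ℝ)..t, |x| ^ (m - 1)) = ∫ x in (0:ℝ)..t, |(-x)| ^ (m - 1) := by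
      simp [abs_neg]
    rw [even, intervalIntegral.integral_comp_neg (fun x => |x| ^ (m-1)), neg_zero,
      intervalIntegral.integral_symm, base (-t) (by linarith),
      Real.sign_of_neg hlt, abs_of_neg hlt]
    ring
  · simp [heq, Real.zero_rpow (ne_of_gt hm0)]
  · rw [base t hgt.le, Real.sign_of_pos hgt, abs_of_pos hgt]; ring

lemma abs_integral_mono0 (t : ℝ) (f g : ℝ → ℝ)
    (hf : IntervalIntegrable f volume 0 t) (hg : IntervalIntegrable g volume 0 t)
    (h : ∀ x ∈ Set.uIcc (0:ℝ) t, |f x| ≤ g x) :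
    |∫ x in (0:ℝ)..t, f x| ≤ |∫ x in (0:ℝ)..t, g x| := by
  rcases le_total 0 t with ht | ht
  · calc |∫ x in (0:ℝ)..t, f x| ≤ ∫ x in (0:ℝ)..t, |f x| :=
          intervalIntegral.abs_integral_le_integral_abs ht
      _ ≤ ∫ x in (0:ℝ)..t, g x := by
          apply intervalIntegral.integral_mono_on ht hf.abs hg
          intro x hx; exact h x (by rwa [Set.uIcc_of_le ht])
      _ ≤ |∫ x in (0:ℝ)..t, g x| := le_abs_self _
  · rw [intervalIntegral.integral_symm, abs_neg, intervalIntegral.integral_symm t 0, abs_neg]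
    calc |∫ x in t..(0:ℝ), f x| ≤ ∫ x in t..(0:ℝ), |f x| :=
          intervalIntegral.abs_integral_le_integral_abs ht
      _ ≤ ∫ x in t..(0:ℝ), g x := by
          apply intervalIntegral.integral_mono_on ht hf.symm.abs hg.symm
          intro x hx; exact h x (by rwa [Set.uIcc_comm, Set.uIcc_of_le ht])
      _ ≤ |∫ x in t..(0:ℝ), g x| := le_abs_self _

/-- Rule H, case `n = m - 1`: for continuous `φ` and real `m > 1`,
`lim_{t→0} (sign(t) · ∫₀ᵗ φ(x)|x|^{m-1} dx) / |t|^m = φ(0)/m`. -/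
theorem ruleH_limit (φ : ℝ → ℝ) (hφ : Continuous φ) (m : ℝ) (hm : 1 < m) :
    Filter.Tendsto
      (fun t : ℝ => (Real.sign t * ∫ x in (0:ℝ)..t, φ x * |x| ^ (m - 1)) / |t| ^ m)
      (nhdsWithin 0 {(0:ℝ)}ᶜ) (nhds (φ 0 / m)) := by
  have hm0 : (0:ℝ) < m := by linarith
  have hgc : Continuous (fun x : ℝ => |x| ^ (m - 1)) :=
    continuous_abs.rpow_const (fun x => Or.inr (by linarith))
  rw [Metric.tendsto_nhdsWithin_nhds]
  intro ε hε
  have hcont := hφ.continuousAt (x := 0)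
  rw [Metric.continuousAt_iff] at hcont
  obtain ⟨δ, hδ, hδ'⟩ := hcont (m * ε / 2) (by positivity)
  refine ⟨δ, hδ, fun t ht htd => ?_⟩
  have ht0 : t ≠ 0 := ht
  have htabs : |t| < δ := by rwa [Real.dist_eq, sub_zero] at htd
  have htpos : (0:ℝ) < |t| ^ m := Real.rpow_pos_of_pos (abs_pos.mpr ht0) m
  have hsign : Real.sign t * Real.sign t = 1 := by
    rcases ht0.lt_or_gt with h | h
    · rw [Real.sign_of_neg h]; norm_num
    · rw [Real.sign_of_pos h]; norm_num
  have hsign_abs : |Real.sign t| = 1 := by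
    rcases ht0.lt_or_gt with h | h
    · rw [Real.sign_of_neg h]; norm_num
    · rw [Real.sign_of_pos h]; norm_num
  have h1 : IntervalIntegrable (fun x => φ x * |x| ^ (m - 1)) volume 0 t :=
    (hφ.mul hgc).intervalIntegrable 0 t
  have h2 : IntervalIntegrable (fun x => φ 0 * |x| ^ (m - 1)) volume 0 t :=
    ((continuous_const).mul hgc).intervalIntegrable 0 t
  have hA : (∫ x in (0:ℝ)..t, (φ x - φ 0) * |x| ^ (m - 1))
      = (∫ x in (0:ℝ)..t, φ x * |x| ^ (m - 1)) - φ 0 * (Real.sign t * |t| ^ m / m) := by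
    have : (fun x => (φ x - φ 0) * |x| ^ (m - 1))
        = fun x => φ x * |x| ^ (m - 1) - φ 0 * |x| ^ (m - 1) := by
      funext x; ring
    rw [this, intervalIntegral.integral_sub h1 h2, intervalIntegral.integral_const_mul,
      absPow_integral m hm t]
  -- express difference
  have heq : (Real.sign t * ∫ x in (0:ℝ)..t, φ x * |x| ^ (m - 1)) / |t| ^ m - φ 0 / m
      = Real.sign t * (∫ x in (0:ℝ)..t, (φ x - φ 0) * |x| ^ (m - 1)) / |t| ^ m := by
    rw [hA]
    field_simp
    linear_combination (φ 0 * |t| ^ m) * hsign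
  have hbound : |∫ x in (0:ℝ)..t, (φ x - φ 0) * |x| ^ (m - 1)|
      ≤ (m * ε / 2) * |t| ^ m / m := by
    have := abs_integral_mono0 t (fun x => (φ x - φ 0) * |x| ^ (m - 1))
      (fun x => (m * ε / 2) * |x| ^ (m - 1))
      (((hφ.sub continuous_const).mul hgc).intervalIntegrable 0 t)
      ((continuous_const.mul hgc).intervalIntegrable 0 t)
      (by
        intro x hx
        have hxle : |x| ≤ |t| := by
          rcases le_total 0 t with h | h
          · rw [Set.uIcc_of_le h] at hx
            rw [abs_of_nonneg hx.1, abs_of_nonneg h]; exact hx.2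
          · rw [Set.uIcc_comm, Set.uIcc_of_le h] at hx
            rw [abs_of_nonpos hx.2, abs_of_nonpos h]; linarith [hx.1]
        have hxδ : dist x 0 < δ := by rw [Real.dist_eq, sub_zero]; exact lt_of_le_of_lt hxle htabs
        have hφx := hδ' hxδ
        rw [Real.dist_eq] at hφx
        rw [abs_mul, abs_of_nonneg (Real.rpow_nonneg (abs_nonneg x) _)]
        exact mul_le_mul_of_nonneg_right hφx.le (Real.rpow_nonneg (abs_nonneg x) _))
    calc |∫ x in (0:ℝ)..t, (φ x - φ 0) * |x| ^ (m - 1)|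
        ≤ |∫ x in (0:ℝ)..t, (m * ε / 2) * |x| ^ (m - 1)| := this
      _ = (m * ε / 2) * |t| ^ m / m := by
          rw [intervalIntegral.integral_const_mul, absPow_integral m hm t, abs_mul,
            abs_of_nonneg (by positivity : (0:ℝ) ≤ m * ε / 2), abs_div, abs_mul, hsign_abs,
            abs_of_nonneg (le_of_lt htpos), abs_of_pos hm0, one_mul]
          ring
  rw [Real.dist_eq, heq, abs_div, abs_mul, hsign_abs, one_mul, abs_of_pos htpos,
    div_lt_iff₀ htpos]
  calc |∫ x in (0:ℝ)..t, (φ x - φ 0) * |x| ^ (m - 1)| ≤ (m * ε / 2) * |t| ^ m / m := hbound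
    _ = (ε / 2) * |t| ^ m := by field_simp
    _ < ε * |t| ^ m := by nlinarith
end

section
/- Let r > -1 and let ψ : (-ε, ε) → ℝ be C¹ with ψ > 0 on (-ε, ε). Define F(t) = sign(t)·(sign(t)·∫₀ᵗ |x|^r ψ(x) dx)^{1/(r+1)}. Then F is of class C¹ on a neighborhood of 0, and F'(0) = (r+1)^{-1/(r+1)}·ψ(0)^{1/(r+1)} > 0. -/
open Set MeasureTheory intervalIntegral Filter Topology

lemma bald_int_abs_rpow {r : ℝ} (hr : -1 < r) (a b : ℝ) :
    IntervalIntegrable (fun x => |x| ^ r) volume a b := by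
  suffices h : ∀ t : ℝ, 0 ≤ t → IntervalIntegrable (fun x => |x| ^ r) volume 0 t by
    have h' : ∀ t : ℝ, IntervalIntegrable (fun x => |x| ^ r) volume 0 t := by
      intro t
      rcases le_total 0 t with ht | ht
      · exact h t ht
      · rw [IntervalIntegrable.iff_comp_neg]
        simp only [abs_neg, neg_zero]
        exact h (-t) (by linarith)
    exact (h' a).symm.trans (h' b)
  intro t ht
  have h0 := intervalIntegrable_rpow' (a := 0) (b := t) hr
  exact h0.congr <| by
    rw [uIoc_of_le ht]
    intro x hx
    simp only [abs_of_pos hx.1]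

lemma bald_integral_abs_rpow {r : ℝ} (hr : -1 < r) (t : ℝ) :
    (∫ x in (0:ℝ)..t, |x| ^ r) = Real.sign t * |t| ^ (r + 1) / (r + 1) := by
  have hr1 : r + 1 ≠ 0 := by linarith
  have key : ∀ t : ℝ, 0 < t → (∫ x in (0:ℝ)..t, |x| ^ r) = t ^ (r + 1) / (r + 1) := by
    intro t ht
    rw [integral_congr (g := fun x => x ^ r) (by
      intro x hx
      rw [uIcc_of_le ht.le] at hx
      simp only
      rw [abs_of_nonneg hx.1]), integral_rpow (Or.inl hr), Real.zero_rpow hr1, sub_zero]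
  rcases lt_trichotomy t 0 with ht | rfl | ht
  · have e1 : (∫ x in t..(0:ℝ), |x| ^ r) = ∫ x in (0:ℝ)..(-t), |x| ^ r := by
      rw [show (∫ x in t..(0:ℝ), |x| ^ r) = ∫ x in t..(0:ℝ), |(-x)| ^ r by
            exact integral_congr fun x _ => by rw [abs_neg],
          integral_comp_neg (f := fun x => |x| ^ r), neg_zero]
    rw [integral_symm, e1, key (-t) (by linarith), Real.sign_of_neg ht, abs_of_neg ht]
    ring
  · simp
  · rw [Real.sign_of_pos ht, abs_of_pos ht, key t ht, one_mul]

lemma bald_int_mul {r : ℝ} (hr : -1 < r) {g : ℝ → ℝ} {t : ℝ}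
    (hg : ContinuousOn g (uIcc 0 t)) :
    IntervalIntegrable (fun x => |x| ^ r * g x) volume 0 t := by
  obtain ⟨C, hC⟩ := isCompact_uIcc.exists_bound_of_continuousOn hg
  have hC0 : 0 ≤ C := le_trans (norm_nonneg _) (hC 0 left_mem_uIcc)
  refine IntervalIntegrable.mono_fun' ((bald_int_abs_rpow hr 0 t).mul_const C) ?_ ?_
  · exact ((by measurability : Measurable fun x : ℝ => |x| ^ r).aestronglyMeasurable).mul
      ((hg.aestronglyMeasurable measurableSet_uIcc).mono_measure
        (Measure.restrict_mono uIoc_subset_uIcc le_rfl))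
  · filter_upwards [ae_restrict_mem measurableSet_uIoc] with x hx
    have h1 : (0:ℝ) ≤ |x| ^ r := Real.rpow_nonneg (abs_nonneg x) r
    calc ‖|x| ^ r * g x‖ = |x| ^ r * ‖g x‖ := by
          rw [norm_mul, Real.norm_of_nonneg h1]
      _ ≤ |x| ^ r * C := by
          exact mul_le_mul_of_nonneg_left (hC x (uIoc_subset_uIcc hx)) h1

lemma bald_uIcc_abs {t x : ℝ} (hx : x ∈ uIcc 0 t) : |x| ≤ |t| := by
  rcases le_total 0 t with ht | ht
  · rw [uIcc_of_le ht] at hx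
    rw [abs_of_nonneg hx.1, abs_of_nonneg ht]; exact hx.2
  · rw [uIcc_of_ge ht] at hx
    rw [abs_of_nonpos hx.2, abs_of_nonpos ht]; exact neg_le_neg hx.1

lemma bald_sub {ε t : ℝ} (htε : |t| < ε) : uIcc 0 t ⊆ Ioo (-ε) ε := fun x hx => by
  have := bald_uIcc_abs hx
  constructor <;> [linarith [neg_abs_le x]; linarith [le_abs_self x]]

lemma bald_est {ε r : ℝ} (hε : 0 < ε) (hr : -1 < r) {ψ : ℝ → ℝ}
    (hψc : ContinuousOn ψ (Ioo (-ε) ε)) {η' t : ℝ} (hη' : 0 < η') (ht0 : t ≠ 0)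
    (htε : |t| < ε) (hΔ : ∀ x, |x| ≤ |t| → |ψ x - ψ 0| ≤ η') :
    |Real.sign t * (∫ x in (0:ℝ)..t, |x| ^ r * ψ x) - ψ 0 * |t| ^ (r + 1) / (r + 1)|
      ≤ η' * |t| ^ (r + 1) / (r + 1) := by
  have hr1 : (0:ℝ) < r + 1 := by linarith
  have hsub : uIcc 0 t ⊆ Ioo (-ε) ε := bald_sub htε
  have hint1 : IntervalIntegrable (fun x => |x| ^ r * ψ x) volume 0 t :=
    bald_int_mul hr (hψc.mono hsub)
  have hint2 : IntervalIntegrable (fun x => |x| ^ r * (ψ x - ψ 0)) volume 0 t :=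
    bald_int_mul hr (((hψc.mono hsub).sub continuousOn_const))
  have hint3 : IntervalIntegrable (fun x => |x| ^ r * |ψ x - ψ 0|) volume 0 t :=
    bald_int_mul hr (((hψc.mono hsub).sub continuousOn_const).abs)
  have hint4 : IntervalIntegrable (fun x => |x| ^ r * η') volume 0 t :=
    (bald_int_abs_rpow hr 0 t).mul_const η'
  have hsgn : Real.sign t * Real.sign t = 1 := by
    rcases lt_or_gt_of_ne ht0 with h | h
    · rw [Real.sign_of_neg h]; norm_num
    · rw [Real.sign_of_pos h]; norm_num
  have hasgn : |Real.sign t| = 1 := by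
    rcases lt_or_gt_of_ne ht0 with h | h
    · rw [Real.sign_of_neg h]; norm_num
    · rw [Real.sign_of_pos h]; norm_num
  have e1 : Real.sign t * (∫ x in (0:ℝ)..t, |x| ^ r * ψ x) - ψ 0 * |t| ^ (r + 1) / (r + 1)
      = Real.sign t * ∫ x in (0:ℝ)..t, |x| ^ r * (ψ x - ψ 0) := by
    have h5 : (∫ x in (0:ℝ)..t, |x| ^ r * (ψ x - ψ 0))
        = (∫ x in (0:ℝ)..t, |x| ^ r * ψ x) - (∫ x in (0:ℝ)..t, |x| ^ r) * ψ 0 := by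
      rw [← intervalIntegral.integral_mul_const]
      rw [← integral_sub hint1 ((bald_int_abs_rpow hr 0 t).mul_const (ψ 0))]
      exact integral_congr fun x _ => by ring
    rw [h5, bald_integral_abs_rpow hr t]
    have hr1' : r + 1 ≠ 0 := ne_of_gt hr1
    field_simp
    linear_combination (|t| ^ (r + 1) * ψ 0) * hsgn
  have e2 : |∫ x in (0:ℝ)..t, |x| ^ r * (ψ x - ψ 0)|
      ≤ |∫ x in (0:ℝ)..t, |x| ^ r * (|ψ x - ψ 0|)| := by
    have h6 := norm_integral_le_abs_integral_norm (μ := volume) (a := 0) (b := t)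
      (f := fun x => |x| ^ r * (ψ x - ψ 0))
    simp only [Real.norm_eq_abs] at h6
    have h7 : (∫ x in (0:ℝ)..t, |(|x| ^ r * (ψ x - ψ 0))|)
        = ∫ x in (0:ℝ)..t, |x| ^ r * (|ψ x - ψ 0|) :=
      integral_congr fun x _ => by
        rw [abs_mul, abs_of_nonneg (Real.rpow_nonneg (abs_nonneg x) r)]
    rwa [h7] at h6
  have e3 : |∫ x in (0:ℝ)..t, |x| ^ r * (|ψ x - ψ 0|)| ≤ η' * |t| ^ (r + 1) / (r + 1) := by
    have hmono : ∀ a b : ℝ, a ≤ b → uIcc a b ⊆ uIcc 0 t →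
        (∫ x in a..b, |x| ^ r * (|ψ x - ψ 0|)) ≤ ∫ x in a..b, |x| ^ r * η' := by
      intro a b hab hs
      refine integral_mono_on hab (hint3.mono_set ?_) (hint4.mono_set ?_) ?_
      · exact hs
      · exact hs
      · intro x hx
        have hx' : |x| ≤ |t| := bald_uIcc_abs (hs (by rw [uIcc_of_le hab]; exact hx))
        exact mul_le_mul_of_nonneg_left (hΔ x hx') (Real.rpow_nonneg (abs_nonneg _) r)
    rcases lt_or_gt_of_ne ht0 with h | h
    · have h1 : (∫ x in t..(0:ℝ), |x| ^ r * (|ψ x - ψ 0|)) ≤ ∫ x in t..(0:ℝ), |x| ^ r * η' :=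
        hmono t 0 h.le (uIcc_comm t 0).subset
      have h2 : (∫ x in t..(0:ℝ), |x| ^ r * η') = η' * |t| ^ (r + 1) / (r + 1) := by
        rw [intervalIntegral.integral_mul_const, integral_symm, bald_integral_abs_rpow hr t,
          Real.sign_of_neg h]
        ring
      have h3 : (0:ℝ) ≤ ∫ x in t..(0:ℝ), |x| ^ r * (|ψ x - ψ 0|) :=
        integral_nonneg h.le fun x _ =>
          mul_nonneg (Real.rpow_nonneg (abs_nonneg _) r) (abs_nonneg _)
      rw [integral_symm, abs_neg, abs_of_nonneg h3]
      linarith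
    · have h1 : (∫ x in (0:ℝ)..t, |x| ^ r * (|ψ x - ψ 0|)) ≤ ∫ x in (0:ℝ)..t, |x| ^ r * η' :=
        hmono 0 t h.le subset_rfl
      have h2 : (∫ x in (0:ℝ)..t, |x| ^ r * η') = η' * |t| ^ (r + 1) / (r + 1) := by
        rw [intervalIntegral.integral_mul_const, bald_integral_abs_rpow hr t, Real.sign_of_pos h]
        ring
      have h3 : (0:ℝ) ≤ ∫ x in (0:ℝ)..t, |x| ^ r * (|ψ x - ψ 0|) :=
        integral_nonneg h.le fun x _ =>
          mul_nonneg (Real.rpow_nonneg (abs_nonneg _) r) (abs_nonneg _)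
      rw [abs_of_nonneg h3]
      linarith
  calc |Real.sign t * (∫ x in (0:ℝ)..t, |x| ^ r * ψ x) - ψ 0 * |t| ^ (r + 1) / (r + 1)|
      = |Real.sign t| * |∫ x in (0:ℝ)..t, |x| ^ r * (ψ x - ψ 0)| := by rw [e1, abs_mul]
    _ = |∫ x in (0:ℝ)..t, |x| ^ r * (ψ x - ψ 0)| := by rw [hasgn, one_mul]
    _ ≤ η' * |t| ^ (r + 1) / (r + 1) := le_trans e2 e3

lemma bald_pos {ε r : ℝ} (hε : 0 < ε) (hr : -1 < r) {ψ : ℝ → ℝ}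
    (hψc : ContinuousOn ψ (Ioo (-ε) ε)) (hψpos : ∀ t ∈ Ioo (-ε) ε, 0 < ψ t)
    {t : ℝ} (ht0 : t ≠ 0) (htε : |t| < ε) :
    0 < Real.sign t * ∫ x in (0:ℝ)..t, |x| ^ r * ψ x := by
  have hint : IntervalIntegrable (fun x => |x| ^ r * ψ x) volume 0 t :=
    bald_int_mul hr (hψc.mono (bald_sub htε))
  rcases lt_or_gt_of_ne ht0 with h | h
  · have h2 : 0 < ∫ x in t..(0:ℝ), |x| ^ r * ψ x := by
      refine intervalIntegral_pos_of_pos_on hint.symm (fun x hx => ?_) h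
      refine mul_pos (Real.rpow_pos_of_pos (abs_pos.2 (ne_of_lt hx.2)) r) (hψpos x ?_)
      exact ⟨by linarith [abs_lt.1 htε |>.1, hx.1], by linarith [hx.2]⟩
    rw [integral_symm] at h2
    rw [Real.sign_of_neg h]
    linarith
  · have h2 : 0 < ∫ x in (0:ℝ)..t, |x| ^ r * ψ x := by
      refine intervalIntegral_pos_of_pos_on hint (fun x hx => ?_) h
      refine mul_pos (Real.rpow_pos_of_pos (abs_pos.2 (ne_of_gt hx.1)) r) (hψpos x ?_)
      exact ⟨by linarith [hx.1], by linarith [abs_lt.1 htε |>.2, hx.2]⟩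
    rw [Real.sign_of_pos h]
    linarith

lemma bald_G_deriv {ε r : ℝ} (hε : 0 < ε) (hr : -1 < r) {ψ : ℝ → ℝ}
    (hψc : ContinuousOn ψ (Ioo (-ε) ε)) {t : ℝ} (ht0 : t ≠ 0) (htε : |t| < ε) :
    HasDerivAt (fun u => ∫ x in (0:ℝ)..u, |x| ^ r * ψ x) (|t| ^ r * ψ t) t := by
  have htmem : t ∈ Ioo (-ε) ε := by
    constructor <;> [linarith [neg_abs_le t]; linarith [le_abs_self t]]
  have hU : IsOpen (Ioo (-ε) ε \ {0}) := isOpen_Ioo.sdiff isClosed_singleton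
  have hfc : ∀ x ∈ Ioo (-ε) ε \ {0}, ContinuousAt (fun x => |x| ^ r * ψ x) x := by
    intro x hx
    exact ((continuous_abs.continuousAt).rpow_const
      (Or.inl (abs_ne_zero.2 hx.2))).mul (hψc.continuousAt (Ioo_mem_nhds hx.1.1 hx.1.2))
  have htU : t ∈ Ioo (-ε) ε \ {0} := ⟨htmem, ht0⟩
  exact integral_hasDerivAt_right (bald_int_mul hr (hψc.mono (bald_sub htε)))
    (ContinuousAt.stronglyMeasurableAtFilter hU hfc t htU) (hfc t htU)

lemma bald_deriv_ne {ε r : ℝ} (hε : 0 < ε) (hr : -1 < r) {ψ : ℝ → ℝ}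
    (hψc : ContinuousOn ψ (Ioo (-ε) ε)) (hψpos : ∀ t ∈ Ioo (-ε) ε, 0 < ψ t)
    {t : ℝ} (ht0 : t ≠ 0) (htε : |t| < ε) :
    HasDerivAt
      (fun t : ℝ =>
        Real.sign t * (Real.sign t * ∫ x in (0:ℝ)..t, |x| ^ r * ψ x) ^ (1 / (r + 1)))
      ((|t| ^ r * ψ t) * (1 / (r + 1)) *
        (Real.sign t * ∫ x in (0:ℝ)..t, |x| ^ r * ψ x) ^ (1 / (r + 1) - 1)) t := by
  have hG := bald_G_deriv hε hr hψc ht0 htε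
  have hpos := bald_pos hε hr hψc hψpos ht0 htε
  rcases lt_or_gt_of_ne ht0 with h | h
  · have hGneg : 0 < -∫ x in (0:ℝ)..t, |x| ^ r * ψ x := by
      rw [Real.sign_of_neg h] at hpos; linarith
    have h2 := (hG.neg.rpow_const (p := 1 / (r + 1)) (Or.inl (ne_of_gt hGneg))).neg
    refine (h2.congr_of_eventuallyEq ?_).congr_deriv ?_
    · filter_upwards [Iio_mem_nhds h] with u hu
      rw [Real.sign_of_neg hu]
      simp only [Pi.neg_apply]
      ring_nf
    · rw [Real.sign_of_neg h]
      simp only [Pi.neg_apply]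
      ring_nf
  · have hGpos : 0 < ∫ x in (0:ℝ)..t, |x| ^ r * ψ x := by
      rw [Real.sign_of_pos h] at hpos; linarith
    have h2 := hG.rpow_const (p := 1 / (r + 1)) (Or.inl (ne_of_gt hGpos))
    refine (h2.congr_of_eventuallyEq ?_).congr_deriv ?_
    · filter_upwards [Ioi_mem_nhds h] with u hu
      rw [Real.sign_of_pos hu]
      ring_nf
    · rw [Real.sign_of_pos h]
      ring_nf

lemma bald_tendsto {ε r : ℝ} (hε : 0 < ε) (hr : -1 < r) {ψ : ℝ → ℝ}
    (hψc : ContinuousOn ψ (Ioo (-ε) ε)) :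
    Tendsto (fun t => Real.sign t * (∫ x in (0:ℝ)..t, |x| ^ r * ψ x) / |t| ^ (r + 1))
      (𝓝[≠] (0:ℝ)) (𝓝 (ψ 0 / (r + 1))) := by
  have hr1 : (0:ℝ) < r + 1 := by linarith
  rw [Metric.tendsto_nhdsWithin_nhds]
  intro η hη
  have hη' : 0 < η * (r + 1) / 2 := by positivity
  set η' := η * (r + 1) / 2 with hη'def
  have hc : ContinuousAt ψ 0 := hψc.continuousAt (Ioo_mem_nhds (by linarith) hε)
  obtain ⟨δ0, hδ0, hδ0'⟩ := Metric.continuousAt_iff.1 hc η' hη'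
  refine ⟨min δ0 ε, lt_min hδ0 hε, fun {t} ht htd => ?_⟩
  have ht0 : t ≠ 0 := ht
  have htabs : |t| < min δ0 ε := by rwa [Real.dist_eq, sub_zero] at htd
  have htε : |t| < ε := lt_of_lt_of_le htabs (min_le_right _ _)
  have hΔ : ∀ x, |x| ≤ |t| → |ψ x - ψ 0| ≤ η' := by
    intro x hx
    have hd : dist x 0 < δ0 := by
      rw [Real.dist_eq, sub_zero]
      exact lt_of_le_of_lt hx (lt_of_lt_of_le htabs (min_le_left _ _))
    have := hδ0' hd
    rw [Real.dist_eq] at this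
    exact this.le
  have hest := bald_est hε hr hψc hη' ht0 htε hΔ
  have hT : (0:ℝ) < |t| ^ (r + 1) := Real.rpow_pos_of_pos (abs_pos.2 ht0) _
  rw [Real.dist_eq]
  have heq : Real.sign t * (∫ x in (0:ℝ)..t, |x| ^ r * ψ x) / |t| ^ (r + 1) - ψ 0 / (r + 1)
      = (Real.sign t * (∫ x in (0:ℝ)..t, |x| ^ r * ψ x) - ψ 0 * |t| ^ (r + 1) / (r + 1))
        / |t| ^ (r + 1) := by
    field_simp
  rw [heq, abs_div, abs_of_pos hT]
  have h8 : |Real.sign t * (∫ x in (0:ℝ)..t, |x| ^ r * ψ x) - ψ 0 * |t| ^ (r + 1) / (r + 1)|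
      / |t| ^ (r + 1) ≤ (η' * |t| ^ (r + 1) / (r + 1)) / |t| ^ (r + 1) :=
    (div_le_div_iff_of_pos_right hT).2 hest
  have h9 : (η' * |t| ^ (r + 1) / (r + 1)) / |t| ^ (r + 1) = η / 2 := by
    rw [hη'def]
    field_simp
  rw [h9] at h8
  linarith

lemma bald_FtdivT {ε r : ℝ} (hε : 0 < ε) (hr : -1 < r) {ψ : ℝ → ℝ}
    (hψc : ContinuousOn ψ (Ioo (-ε) ε)) (hψpos : ∀ t ∈ Ioo (-ε) ε, 0 < ψ t)
    {t : ℝ} (ht0 : t ≠ 0) (htε : |t| < ε) :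
    Real.sign t * (Real.sign t * ∫ x in (0:ℝ)..t, |x| ^ r * ψ x) ^ (1 / (r + 1)) / t
      = (Real.sign t * (∫ x in (0:ℝ)..t, |x| ^ r * ψ x) / |t| ^ (r + 1)) ^ (1 / (r + 1)) := by
  have hr1 : (0:ℝ) < r + 1 := by linarith
  have hS := bald_pos hε hr hψc hψpos ht0 htε
  have hT : (0:ℝ) < |t| ^ (r + 1) := Real.rpow_pos_of_pos (abs_pos.2 ht0) _
  rw [Real.div_rpow hS.le hT.le]
  have hTp : (|t| ^ (r + 1)) ^ (1 / (r + 1)) = |t| := by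
    rw [← Real.rpow_mul (abs_nonneg t), mul_one_div_cancel (ne_of_gt hr1), Real.rpow_one]
  rw [hTp]
  rcases lt_or_gt_of_ne ht0 with h | h
  · rw [Real.sign_of_neg h, abs_of_neg h]
    field_simp
  · rw [Real.sign_of_pos h, abs_of_pos h]
    field_simp

lemma bald_deriv_zero {ε r : ℝ} (hε : 0 < ε) (hr : -1 < r) {ψ : ℝ → ℝ}
    (hψc : ContinuousOn ψ (Ioo (-ε) ε)) (hψpos : ∀ t ∈ Ioo (-ε) ε, 0 < ψ t) :
    HasDerivAt
      (fun t : ℝ =>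
        Real.sign t * (Real.sign t * ∫ x in (0:ℝ)..t, |x| ^ r * ψ x) ^ (1 / (r + 1)))
      ((r + 1) ^ (-(1 / (r + 1))) * ψ 0 ^ (1 / (r + 1))) 0 := by
  have hr1 : (0:ℝ) < r + 1 := by linarith
  have hψ0 : 0 < ψ 0 := hψpos 0 ⟨by linarith, hε⟩
  have hA : 0 < ψ 0 / (r + 1) := by positivity
  rw [hasDerivAt_iff_tendsto_slope]
  have h2 := (bald_tendsto hε hr hψc).rpow_const (p := 1 / (r + 1)) (Or.inl (ne_of_gt hA))
  have hval : (ψ 0 / (r + 1)) ^ (1 / (r + 1))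
      = (r + 1) ^ (-(1 / (r + 1))) * ψ 0 ^ (1 / (r + 1)) := by
    rw [Real.div_rpow hψ0.le hr1.le, Real.rpow_neg hr1.le, div_eq_mul_inv, mul_comm]
  rw [hval] at h2
  refine h2.congr' ?_
  have hev : ∀ᶠ t in 𝓝[≠] (0:ℝ), t ≠ 0 ∧ |t| < ε := by
    filter_upwards [self_mem_nhdsWithin,
      eventually_nhdsWithin_of_eventually_nhds
        (eventually_of_mem (Ioo_mem_nhds (by linarith : -ε < (0:ℝ)) hε)
          (fun x hx => abs_lt.2 ⟨hx.1, hx.2⟩))] with t h1 h2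
    exact ⟨h1, h2⟩
  filter_upwards [hev] with t ⟨ht0, htε⟩
  rw [slope_def_field]
  simp only [Real.sign_zero, zero_mul, sub_zero]
  exact (bald_FtdivT hε hr hψc hψpos ht0 htε).symm

/-- The `C¹` case of Baldomero's theorem: for `r > -1` and `ψ` of class `C¹` on
`(-ε,ε)` with `ψ > 0` there, the function
`F(t) = sign(t)·(sign(t)·∫₀ᵗ |x|^r ψ(x) dx)^{1/(r+1)}` is `C¹` on a neighborhood of `0`
with `F'(0) = (r+1)^{-1/(r+1)}·ψ(0)^{1/(r+1)} > 0`. -/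
theorem baldomero_C1 (ε r : ℝ) (hε : 0 < ε) (hr : -1 < r) (ψ : ℝ → ℝ)
    (hψ : ContDiffOn ℝ 1 ψ (Ioo (-ε) ε)) (hψpos : ∀ t ∈ Ioo (-ε) ε, 0 < ψ t) :
    ∃ δ > 0, δ ≤ ε ∧
      ContDiffOn ℝ 1
        (fun t : ℝ =>
          Real.sign t * (Real.sign t * ∫ x in (0:ℝ)..t, |x| ^ r * ψ x) ^ (1 / (r + 1)))
        (Ioo (-δ) δ) ∧
      HasDerivAt
        (fun t : ℝ =>
          Real.sign t * (Real.sign t * ∫ x in (0:ℝ)..t, |x| ^ r * ψ x) ^ (1 / (r + 1)))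
        ((r + 1) ^ (-(1 / (r + 1))) * ψ 0 ^ (1 / (r + 1))) 0 ∧
      0 < (r + 1) ^ (-(1 / (r + 1))) * ψ 0 ^ (1 / (r + 1)) := by
  have hψc : ContinuousOn ψ (Ioo (-ε) ε) := hψ.continuousOn
  have hr1 : (0:ℝ) < r + 1 := by linarith
  have hψ0 : 0 < ψ 0 := hψpos 0 ⟨by linarith, hε⟩
  set F : ℝ → ℝ := fun t : ℝ =>
    Real.sign t * (Real.sign t * ∫ x in (0:ℝ)..t, |x| ^ r * ψ x) ^ (1 / (r + 1)) with hF
  have habs : ∀ t : ℝ, t ∈ Ioo (-ε) ε → |t| < ε := fun t ht => abs_lt.2 ⟨ht.1, ht.2⟩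
  -- differentiability
  have hdiff : DifferentiableOn ℝ F (Ioo (-ε) ε) := by
    intro t ht
    rcases eq_or_ne t 0 with rfl | ht0
    · exact (bald_deriv_zero hε hr hψc hψpos).differentiableAt.differentiableWithinAt
    · exact (bald_deriv_ne hε hr hψc hψpos ht0 (habs t ht)).differentiableAt.differentiableWithinAt
  -- continuity of the derivative
  have hderiv_ne : ∀ t : ℝ, t ≠ 0 → |t| < ε → deriv F t
      = (|t| ^ r * ψ t) * (1 / (r + 1)) *
        (Real.sign t * ∫ x in (0:ℝ)..t, |x| ^ r * ψ x) ^ (1 / (r + 1) - 1) := by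
    intro t ht0 htε
    exact (bald_deriv_ne hε hr hψc hψpos ht0 htε).deriv
  have hcont : ContinuousOn (deriv F) (Ioo (-ε) ε) := by
    intro t ht
    rcases eq_or_ne t 0 with rfl | ht0
    · -- continuity at 0
      apply ContinuousAt.continuousWithinAt
      have hA : 0 < ψ 0 / (r + 1) := by positivity
      have hc0 : ContinuousAt ψ 0 := hψc.continuousAt (Ioo_mem_nhds (by linarith) hε)
      have hψtd : Tendsto ψ (𝓝[≠] (0:ℝ)) (𝓝 (ψ 0)) :=
        hc0.continuousWithinAt.tendsto
      have hQtd := (bald_tendsto hε hr hψc).rpow_const (p := 1 / (r + 1) - 1)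
        (Or.inl (ne_of_gt hA))
      have hbase : Tendsto (fun t => ψ t * (1 / (r + 1)) *
          (Real.sign t * (∫ x in (0:ℝ)..t, |x| ^ r * ψ x) / |t| ^ (r + 1))
            ^ (1 / (r + 1) - 1))
          (𝓝[≠] (0:ℝ))
          (𝓝 (ψ 0 * (1 / (r + 1)) * (ψ 0 / (r + 1)) ^ (1 / (r + 1) - 1))) :=
        (hψtd.mul tendsto_const_nhds).mul hQtd
      have hvalue : ψ 0 * (1 / (r + 1)) * (ψ 0 / (r + 1)) ^ (1 / (r + 1) - 1)
          = (r + 1) ^ (-(1 / (r + 1))) * ψ 0 ^ (1 / (r + 1)) := by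
        have e2 : (ψ 0 / (r + 1)) ^ (1 / (r + 1) - 1) * (ψ 0 / (r + 1)) ^ (1:ℝ)
            = (ψ 0 / (r + 1)) ^ (1 / (r + 1)) := by
          rw [← Real.rpow_add hA, sub_add_cancel]
        have e3 : (ψ 0 / (r + 1)) ^ (1 / (r + 1))
            = (r + 1) ^ (-(1 / (r + 1))) * ψ 0 ^ (1 / (r + 1)) := by
          rw [Real.div_rpow hψ0.le hr1.le, Real.rpow_neg hr1.le, div_eq_mul_inv, mul_comm]
        rw [← e3, ← e2, Real.rpow_one]
        ring
      have htd : Tendsto (deriv F) (𝓝[≠] (0:ℝ))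
          (𝓝 ((r + 1) ^ (-(1 / (r + 1))) * ψ 0 ^ (1 / (r + 1)))) := by
        rw [← hvalue]
        refine hbase.congr' ?_
        have hev : ∀ᶠ u in 𝓝[≠] (0:ℝ), u ≠ 0 ∧ |u| < ε := by
          filter_upwards [self_mem_nhdsWithin,
            eventually_nhdsWithin_of_eventually_nhds
              (eventually_of_mem (Ioo_mem_nhds (by linarith : -ε < (0:ℝ)) hε)
                (fun x hx => abs_lt.2 ⟨hx.1, hx.2⟩))] with u h1 h2
          exact ⟨h1, h2⟩
        filter_upwards [hev] with u ⟨hu0, huε⟩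
        rw [hderiv_ne u hu0 huε]
        -- rewrite S^(p-1) = Q^(p-1) * |u|^(-r)
        have hu : (0:ℝ) < |u| := abs_pos.2 hu0
        have hT : (0:ℝ) < |u| ^ (r + 1) := Real.rpow_pos_of_pos hu _
        have hS := bald_pos hε hr hψc hψpos hu0 huε
        set S := Real.sign u * ∫ x in (0:ℝ)..u, |x| ^ r * ψ x with hSdef
        set Q := S / |u| ^ (r + 1) with hQdef
        have hSQ : S = Q * |u| ^ (r + 1) := (div_mul_cancel₀ S (ne_of_gt hT)).symm
        have hQ0 : 0 ≤ Q := le_of_lt (div_pos hS hT)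
        have hpow : (|u| ^ (r + 1)) ^ (1 / (r + 1) - 1) = |u| ^ (-r) := by
          rw [← Real.rpow_mul (abs_nonneg u)]
          congr 1
          field_simp
          ring
        have hSmul : S ^ (1 / (r + 1) - 1) = Q ^ (1 / (r + 1) - 1) * |u| ^ (-r) := by
          rw [hSQ, Real.mul_rpow hQ0 hT.le, hpow]
        rw [hSmul]
        have hone : |u| ^ r * |u| ^ (-r) = 1 := by
          rw [← Real.rpow_add hu]
          norm_num
        linear_combination (-(ψ u * (1 / (r + 1)) * Q ^ (1 / (r + 1) - 1))) * hone
      rw [ContinuousAt]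
      have hd0 : deriv F 0 = (r + 1) ^ (-(1 / (r + 1))) * ψ 0 ^ (1 / (r + 1)) :=
        (bald_deriv_zero hε hr hψc hψpos).deriv
      rw [hd0]
      rw [← nhdsNE_sup_pure (0:ℝ), tendsto_sup]
      exact ⟨htd, by simpa [hd0] using tendsto_pure_nhds (deriv F) (0:ℝ)⟩
    · -- continuity at t ≠ 0
      apply ContinuousAt.continuousWithinAt
      have htε := habs t ht
      have hGc : ContinuousAt (fun u => ∫ x in (0:ℝ)..u, |x| ^ r * ψ x) t :=
        (bald_G_deriv hε hr hψc ht0 htε).continuousAt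
      have hfc : ContinuousAt (fun u => |u| ^ r * ψ u) t :=
        ((continuous_abs.continuousAt).rpow_const (Or.inl (abs_ne_zero.2 ht0))).mul
          (hψc.continuousAt (Ioo_mem_nhds ht.1 ht.2))
      have hpos := bald_pos hε hr hψc hψpos ht0 htε
      rcases lt_or_gt_of_ne ht0 with h | h
      · have hGneg : (∫ x in (0:ℝ)..t, |x| ^ r * ψ x) ≠ 0 := by
          rw [Real.sign_of_neg h] at hpos
          intro hc; rw [hc] at hpos; simp at hpos
        have hg : ContinuousAt (fun u => (|u| ^ r * ψ u) * (1 / (r + 1)) *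
            (-∫ x in (0:ℝ)..u, |x| ^ r * ψ x) ^ (1 / (r + 1) - 1)) t :=
          (hfc.mul continuousAt_const).mul
            ((hGc.neg).rpow_const (Or.inl (neg_ne_zero.2 hGneg)))
        refine hg.congr ?_
        have hmem : (Ioo (-ε) ε ∩ Iio 0) ∈ 𝓝 t :=
          inter_mem (Ioo_mem_nhds ht.1 ht.2) (Iio_mem_nhds h)
        filter_upwards [hmem] with u ⟨hu1, hu2⟩
        rw [hderiv_ne u (ne_of_lt hu2) (habs u hu1), Real.sign_of_neg hu2]
        ring_nf
      · have hGpos : (∫ x in (0:ℝ)..t, |x| ^ r * ψ x) ≠ 0 := by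
          rw [Real.sign_of_pos h] at hpos
          intro hc; rw [hc] at hpos; simp at hpos
        have hg : ContinuousAt (fun u => (|u| ^ r * ψ u) * (1 / (r + 1)) *
            (∫ x in (0:ℝ)..u, |x| ^ r * ψ x) ^ (1 / (r + 1) - 1)) t :=
          (hfc.mul continuousAt_const).mul (hGc.rpow_const (Or.inl hGpos))
        refine hg.congr ?_
        have hmem : (Ioo (-ε) ε ∩ Ioi 0) ∈ 𝓝 t :=
          inter_mem (Ioo_mem_nhds ht.1 ht.2) (Ioi_mem_nhds h)
        filter_upwards [hmem] with u ⟨hu1, hu2⟩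
        rw [hderiv_ne u (ne_of_gt hu2) (habs u hu1), Real.sign_of_pos hu2]
        ring_nf
  refine ⟨ε, hε, le_refl ε, ?_, bald_deriv_zero hε hr hψc hψpos, ?_⟩
  · rw [show (1 : WithTop ℕ∞) = 0 + 1 by norm_num,
      contDiffOn_succ_iff_deriv_of_isOpen isOpen_Ioo]
    exact ⟨hdiff, by simp, contDiffOn_zero.2 hcont⟩
  · exact mul_pos (Real.rpow_pos_of_pos hr1 _) (Real.rpow_pos_of_pos hψ0 _)
end
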